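/- Let (t_k) be a sequence of positive reals with t_k → 0, for each k let (x^k,y^k) be a Karush–Kuhn–Tucker point of the Scholtes-type regularization S(t_k), and suppose (x^k,y^k) → (x̄,ȳ) where (x̄,ȳ) is a nondegenerate T-stationary point of the regularized continuous reformulation R with (unique) multipliers (λ̄,μ̄,σ̄,ϱ̄). Then for all sufficiently large k it holds a01(x̄,ȳ) \ H(x^k,y^k) ⊆ {i ∈ a01(x̄,ȳ) : σ̄_{1,i} = 0}; in particular, every index i ∈ a01(x̄,ȳ) with σ̄_{1,i} ≠ 0 belongs to H(x^k,y^k) for all sufficiently large k. -/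

import Mathlib

open scoped Classical
open Finset Filter Topology

noncomputable section
namespace Scholtes

/-- Vectors in ℝⁿ. -/
abbrev Vec (n : ℕ) := Fin n → ℝ

variable {n : ℕ} {P Q : Type*} [Fintype P] [Fintype Q]

/-- Euclidean dot product. -/
def dot (u v : Vec n) : ℝ := ∑ i, u i * v i

/-- Gradient: vector of partial derivatives. -/
def grad (f : Vec n → ℝ) (x : Vec n) : Vec n := fun i => fderiv ℝ f x (Pi.single i 1)

/-- Hessian bilinear form of `L` at `z`, evaluated at directions `ξ`, `ζ`. -/
def hess (L : Vec n × Vec n → ℝ) (z ξ ζ : Vec n × Vec n) : ℝ :=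
  fderiv ℝ (fun w => fderiv ℝ L w ξ) z ζ

/-- The pair vector (e_i, 0) ∈ ℝ²ⁿ. -/
def ex (i : Fin n) : Vec n × Vec n := (Pi.single i 1, 0)

/-- The pair vector (0, e_i) ∈ ℝ²ⁿ. -/
def ey (i : Fin n) : Vec n × Vec n := (0, Pi.single i 1)

/-- The pair vector (0, e) ∈ ℝ²ⁿ, where e is the all-ones vector. -/
def eAll : Vec n × Vec n := (0, fun _ => 1)

/-- The pair vector (y_i e_i, x_i e_i) ∈ ℝ²ⁿ. -/
def hvec (x y : Vec n) (i : Fin n) : Vec n × Vec n := (Pi.single i (y i), Pi.single i (x i))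

/-- The number of negative eigenvalues of the bilinear form `B` restricted to the
(sub)space `T`, expressed as the maximal dimension of a linear subspace of `T` on
which the associated quadratic form is negative definite. -/
def negIndex (B : (Vec n × Vec n) → (Vec n × Vec n) → ℝ) (T : (Vec n × Vec n) → Prop) : ℕ :=
  sSup {d : ℕ | ∃ W : Submodule ℝ (Vec n × Vec n),
    (∀ ξ ∈ W, T ξ) ∧ Module.finrank ℝ W = d ∧ ∀ ξ ∈ W, ξ ≠ 0 → B ξ ξ < 0}

/-- The data and standing assumptions of the paper: objective `f`, equality
constraints `h`, inequality constraints `g`, positive pairwise different linear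
coefficients `c`, cardinality bound `s` and regularization parameter `ε`. -/
structure Setting (n : ℕ) (P Q : Type*) [Fintype P] [Fintype Q] where
  f : Vec n → ℝ
  h : P → Vec n → ℝ
  g : Q → Vec n → ℝ
  c : Vec n
  s : ℕ
  ε : ℝ
  hn : 1 ≤ n
  hf : ContDiff ℝ 2 f
  hh : ∀ p, ContDiff ℝ 2 (h p)
  hg : ∀ q, ContDiff ℝ 2 (g q)
  hcpos : ∀ i, 0 < c i
  hcinj : Function.Injective c
  hs : s < n
  hεpos : 0 < ε
  hεle : ε ≤ 1 / ((n : ℝ) - s)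

/-- Index set a01: x̄_i = 0, ȳ_i > 0. -/
def a01 (x y : Vec n) : Finset (Fin n) := univ.filter fun i => x i = 0 ∧ 0 < y i

/-- Index set a10: x̄_i ≠ 0, ȳ_i = 0. -/
def a10 (x y : Vec n) : Finset (Fin n) := univ.filter fun i => x i ≠ 0 ∧ y i = 0

/-- Index set a00: x̄_i = 0, ȳ_i = 0. -/
def a00 (x y : Vec n) : Finset (Fin n) := univ.filter fun i => x i = 0 ∧ y i = 0

/-- Index set N(y): y_i = 0. -/
def Nact (y : Vec n) : Finset (Fin n) := univ.filter fun i => y i = 0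

/-- Index set H≥(x,y): x_i y_i = −t. -/
def Hge (t : ℝ) (x y : Vec n) : Finset (Fin n) := univ.filter fun i => x i * y i = -t

/-- Index set H≤(x,y): x_i y_i = t. -/
def Hle (t : ℝ) (x y : Vec n) : Finset (Fin n) := univ.filter fun i => x i * y i = t

/-- Index set H(x,y) = H≥ ∪ H≤. -/
def Hact (t : ℝ) (x y : Vec n) : Finset (Fin n) := Hge t x y ∪ Hle t x y

/-- Active inequality constraints Q0(x). -/
def Q0 (D : Setting n P Q) (x : Vec n) : Finset Q := univ.filter fun q => D.g q x = 0

/-- Active upper bounds E(y): y_i = 1 + ε. -/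
def Eact (D : Setting n P Q) (y : Vec n) : Finset (Fin n) := univ.filter fun i => y i = 1 + D.ε

/-- Index set O(x,y) = complement of E(y) ∪ N(y) ∪ H(x,y). -/
def Oact (D : Setting n P Q) (t : ℝ) (x y : Vec n) : Finset (Fin n) :=
  (Eact D y ∪ Nact y ∪ Hact t x y)ᶜ

/-- Feasibility for the regularized continuous reformulation R. -/
def feasR (D : Setting n P Q) (x y : Vec n) : Prop :=
  (∀ p, D.h p x = 0) ∧ (∀ q, 0 ≤ D.g q x) ∧ ((n : ℝ) - D.s ≤ ∑ i, y i) ∧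
  (∀ i, x i * y i = 0) ∧ (∀ i, 0 ≤ y i ∧ y i ≤ 1 + D.ε)

/-- Feasibility for the Scholtes-type regularization S(t). -/
def feasS (D : Setting n P Q) (t : ℝ) (x y : Vec n) : Prop :=
  (∀ p, D.h p x = 0) ∧ (∀ q, 0 ≤ D.g q x) ∧ ((n : ℝ) - D.s ≤ ∑ i, y i) ∧
  (∀ i, -t ≤ x i * y i ∧ x i * y i ≤ t) ∧ (∀ i, 0 ≤ y i ∧ y i ≤ 1 + D.ε)

/-- Multipliers for T-stationarity (defined on the whole index ranges). -/
structure TMult (n : ℕ) (P Q : Type*) where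
  lam : P → ℝ
  mu1 : Q → ℝ
  mu2 : Fin n → ℝ
  mu3 : ℝ
  sig1 : Fin n → ℝ
  sig2 : Fin n → ℝ
  rho1 : Fin n → ℝ
  rho2 : Fin n → ℝ

/-- The T-stationarity equation (1) of Definition 2. -/
def TStatEq (D : Setting n P Q) (x y : Vec n) (M : TMult n P Q) : Prop :=
  ((grad D.f x, D.c) : Vec n × Vec n) =
    (∑ p, M.lam p • ((grad (D.h p) x, (0 : Vec n)) : Vec n × Vec n))
    + (∑ q ∈ Q0 D x, M.mu1 q • ((grad (D.g q) x, (0 : Vec n)) : Vec n × Vec n))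
    - (∑ i ∈ Eact D y, M.mu2 i • ey i)
    + M.mu3 • eAll
    + (∑ i ∈ a01 x y, M.sig1 i • ex i)
    + (∑ i ∈ a10 x y, M.sig2 i • ey i)
    + (∑ i ∈ a00 x y, (M.rho1 i • ex i + M.rho2 i • ey i))

/-- (x,y) is a T-stationary point of R with multipliers M. -/
def TStatAt (D : Setting n P Q) (x y : Vec n) (M : TMult n P Q) : Prop :=
  feasR D x y ∧
  (∀ q ∈ Q0 D x, 0 ≤ M.mu1 q) ∧
  (∀ i ∈ Eact D y, 0 ≤ M.mu2 i) ∧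
  0 ≤ M.mu3 ∧
  M.mu3 * ((∑ i, y i) - ((n : ℝ) - D.s)) = 0 ∧
  (∀ i ∈ a00 x y, M.rho1 i = 0 ∨ M.rho2 i ≤ 0) ∧
  TStatEq D x y M

/-- (x,y) is a T-stationary point of R. -/
def TStat (D : Setting n P Q) (x y : Vec n) : Prop := ∃ M, TStatAt D x y M

/-- MPOC-tailored LICQ at a feasible point (x,y) of R: the indicated family of
vectors in ℝ²ⁿ is linearly independent. -/
def MPOC_LICQ (D : Setting n P Q) (x y : Vec n) : Prop :=
  ∀ (lam : P → ℝ) (mu1 : Q → ℝ) (mu2 : Fin n → ℝ) (mu3 : ℝ) (s1 s2 : Fin n → ℝ),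
    ((∑ i, y i) ≠ (n : ℝ) - D.s → mu3 = 0) →
    (∑ p, lam p • ((grad (D.h p) x, (0 : Vec n)) : Vec n × Vec n))
    + (∑ q ∈ Q0 D x, mu1 q • ((grad (D.g q) x, (0 : Vec n)) : Vec n × Vec n))
    + (∑ i ∈ Eact D y, mu2 i • ey i)
    + mu3 • eAll
    + (∑ i ∈ a01 x y ∪ a00 x y, s1 i • ex i)
    + (∑ i ∈ a10 x y ∪ a00 x y, s2 i • ey i) = 0 →
    (∀ p, lam p = 0) ∧ (∀ q ∈ Q0 D x, mu1 q = 0) ∧ (∀ i ∈ Eact D y, mu2 i = 0) ∧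
    mu3 = 0 ∧ (∀ i ∈ a01 x y ∪ a00 x y, s1 i = 0) ∧ (∀ i ∈ a10 x y ∪ a00 x y, s2 i = 0)

/-- The Lagrange function L^R associated with the T-stationary point (x̄,ȳ)
and multipliers M. -/
def LagR (D : Setting n P Q) (xb yb : Vec n) (M : TMult n P Q) (z : Vec n × Vec n) : ℝ :=
  D.f z.1 + dot D.c z.2
    - (∑ p, M.lam p * D.h p z.1)
    - (∑ q ∈ Q0 D xb, M.mu1 q * D.g q z.1)
    + (∑ i ∈ Eact D yb, M.mu2 i * (z.2 i - (1 + D.ε)))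
    - M.mu3 * ((∑ i, z.2 i) - ((n : ℝ) - D.s))
    - (∑ i ∈ a01 xb yb, M.sig1 i * z.1 i)
    - (∑ i ∈ a10 xb yb, M.sig2 i * z.2 i)
    - (∑ i ∈ a00 xb yb, (M.rho1 i * z.1 i + M.rho2 i * z.2 i))

/-- Membership in the tangent space T^R at (x̄,ȳ). -/
def inTR (D : Setting n P Q) (x y : Vec n) (ξ : Vec n × Vec n) : Prop :=
  (∀ p, dot (grad (D.h p) x) ξ.1 = 0) ∧
  (∀ q ∈ Q0 D x, dot (grad (D.g q) x) ξ.1 = 0) ∧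
  (∀ i ∈ Eact D y, ξ.2 i = 0) ∧
  ((∑ i, y i) = (n : ℝ) - D.s → (∑ i, ξ.2 i) = 0) ∧
  (∀ i ∈ a00 x y ∪ a01 x y, ξ.1 i = 0) ∧
  (∀ i ∈ a00 x y ∪ a10 x y, ξ.2 i = 0)

/-- Nondegenerate T-stationary point with multipliers M (NDT1–NDT4). -/
def NondegTStatAt (D : Setting n P Q) (x y : Vec n) (M : TMult n P Q) : Prop :=
  TStatAt D x y M ∧
  MPOC_LICQ D x y ∧
  (∀ q ∈ Q0 D x, 0 < M.mu1 q) ∧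
  (∀ i ∈ Eact D y, 0 < M.mu2 i) ∧
  ((∑ i, y i) = (n : ℝ) - D.s → 0 < M.mu3) ∧
  (∀ i ∈ a00 x y, M.rho1 i ≠ 0 ∧ M.rho2 i < 0) ∧
  (∀ ξ, inTR D x y ξ → (∀ ζ, inTR D x y ζ → hess (LagR D x y M) (x, y) ξ ζ = 0) → ξ = 0)

/-- T-index: quadratic index (number of negative eigenvalues of the restricted
Hessian of L^R) plus the biactive index |a00|. -/
def TIndex (D : Setting n P Q) (x y : Vec n) (M : TMult n P Q) : ℕ :=
  negIndex (hess (LagR D x y M) (x, y)) (inTR D x y) + (a00 x y).card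

/-- Multipliers for KKT points of S(t) (defined on the whole index ranges). -/
structure SMult (n : ℕ) (P Q : Type*) where
  lam : P → ℝ
  mu1 : Q → ℝ
  mu2 : Fin n → ℝ
  mu3 : ℝ
  etaGe : Fin n → ℝ
  etaLe : Fin n → ℝ
  nu : Fin n → ℝ

/-- The KKT equation for S(t). -/
def KKTEq (D : Setting n P Q) (t : ℝ) (x y : Vec n) (M : SMult n P Q) : Prop :=
  ((grad D.f x, D.c) : Vec n × Vec n) =
    (∑ p, M.lam p • ((grad (D.h p) x, (0 : Vec n)) : Vec n × Vec n))
    + (∑ q ∈ Q0 D x, M.mu1 q • ((grad (D.g q) x, (0 : Vec n)) : Vec n × Vec n))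
    - (∑ i ∈ Eact D y, M.mu2 i • ey i)
    + M.mu3 • eAll
    + (∑ i ∈ Hge t x y, M.etaGe i • hvec x y i)
    - (∑ i ∈ Hle t x y, M.etaLe i • hvec x y i)
    + (∑ i ∈ Nact y, M.nu i • ey i)

/-- (x,y) is a KKT point of S(t) with multipliers M. -/
def KKTAt (D : Setting n P Q) (t : ℝ) (x y : Vec n) (M : SMult n P Q) : Prop :=
  feasS D t x y ∧
  (∀ q ∈ Q0 D x, 0 ≤ M.mu1 q) ∧
  (∀ i ∈ Eact D y, 0 ≤ M.mu2 i) ∧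
  0 ≤ M.mu3 ∧
  M.mu3 * ((∑ i, y i) - ((n : ℝ) - D.s)) = 0 ∧
  (∀ i ∈ Hge t x y, 0 ≤ M.etaGe i) ∧
  (∀ i ∈ Hle t x y, 0 ≤ M.etaLe i) ∧
  (∀ i ∈ Nact y, 0 ≤ M.nu i) ∧
  KKTEq D t x y M

/-- (x,y) is a KKT point of S(t). -/
def KKT (D : Setting n P Q) (t : ℝ) (x y : Vec n) : Prop := ∃ M, KKTAt D t x y M

/-- LICQ at a feasible point (x,y) of S(t). -/
def LICQ (D : Setting n P Q) (t : ℝ) (x y : Vec n) : Prop :=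
  ∀ (lam : P → ℝ) (mu1 : Q → ℝ) (mu2 : Fin n → ℝ) (mu3 : ℝ) (eta nu : Fin n → ℝ),
    ((∑ i, y i) ≠ (n : ℝ) - D.s → mu3 = 0) →
    (∑ p, lam p • ((grad (D.h p) x, (0 : Vec n)) : Vec n × Vec n))
    + (∑ q ∈ Q0 D x, mu1 q • ((grad (D.g q) x, (0 : Vec n)) : Vec n × Vec n))
    + (∑ i ∈ Eact D y, mu2 i • ey i)
    + mu3 • eAll
    + (∑ i ∈ Hact t x y, eta i • hvec x y i)
    + (∑ i ∈ Nact y, nu i • ey i) = 0 →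
    (∀ p, lam p = 0) ∧ (∀ q ∈ Q0 D x, mu1 q = 0) ∧ (∀ i ∈ Eact D y, mu2 i = 0) ∧
    mu3 = 0 ∧ (∀ i ∈ Hact t x y, eta i = 0) ∧ (∀ i ∈ Nact y, nu i = 0)

/-- The Lagrange function L^S associated with the KKT point (x̄,ȳ) of S(t)
and multipliers M. -/
def LagS (D : Setting n P Q) (t : ℝ) (xb yb : Vec n) (M : SMult n P Q)
    (z : Vec n × Vec n) : ℝ :=
  D.f z.1 + dot D.c z.2
    - (∑ p, M.lam p * D.h p z.1)
    - (∑ q ∈ Q0 D xb, M.mu1 q * D.g q z.1)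
    + (∑ i ∈ Eact D yb, M.mu2 i * (z.2 i - (1 + D.ε)))
    - M.mu3 * ((∑ i, z.2 i) - ((n : ℝ) - D.s))
    - (∑ i ∈ Hge t xb yb, M.etaGe i * (z.1 i * z.2 i + t))
    + (∑ i ∈ Hle t xb yb, M.etaLe i * (z.1 i * z.2 i - t))
    - (∑ i ∈ Nact yb, M.nu i * z.2 i)

/-- Membership in the tangent space T^S at (x,y) for S(t). -/
def inTS (D : Setting n P Q) (t : ℝ) (x y : Vec n) (ξ : Vec n × Vec n) : Prop :=
  (∀ p, dot (grad (D.h p) x) ξ.1 = 0) ∧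
  (∀ q ∈ Q0 D x, dot (grad (D.g q) x) ξ.1 = 0) ∧
  (∀ i ∈ Eact D y, ξ.2 i = 0) ∧
  ((∑ i, y i) = (n : ℝ) - D.s → (∑ i, ξ.2 i) = 0) ∧
  (∀ i ∈ Hact t x y, y i * ξ.1 i + x i * ξ.2 i = 0) ∧
  (∀ i ∈ Nact y, ξ.2 i = 0)

/-- Nondegenerate KKT point of S(t) with multipliers M (ND1–ND3). -/
def NondegKKTAt (D : Setting n P Q) (t : ℝ) (x y : Vec n) (M : SMult n P Q) : Prop :=
  KKTAt D t x y M ∧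
  LICQ D t x y ∧
  (∀ q ∈ Q0 D x, 0 < M.mu1 q) ∧
  (∀ i ∈ Eact D y, 0 < M.mu2 i) ∧
  (∀ i ∈ Hge t x y, 0 < M.etaGe i) ∧
  (∀ i ∈ Hle t x y, 0 < M.etaLe i) ∧
  (∀ i ∈ Nact y, 0 < M.nu i) ∧
  ((∑ i, y i) = (n : ℝ) - D.s → 0 < M.mu3) ∧
  (∀ ξ, inTS D t x y ξ → (∀ ζ, inTS D t x y ζ → hess (LagS D t x y M) (x, y) ξ ζ = 0) → ξ = 0)

/-- Quadratic index of a KKT point of S(t): number of negative eigenvalues of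
the restricted Hessian of L^S. -/
def QIdx (D : Setting n P Q) (t : ℝ) (x y : Vec n) (M : SMult n P Q) : ℕ :=
  negIndex (hess (LagS D t x y M) (x, y)) (inTS D t x y)


section Statement18Aux

variable {n : ℕ} {P Q : Type*} [Fintype P] [Fintype Q]

/-- Combined multiplier space. -/
abbrev MultV (n : ℕ) (P Q : Type*) : Type _ :=
  (P → ℝ) × (Q → ℝ) × (Fin n → ℝ) × ℝ × (Fin n → ℝ) × (Fin n → ℝ)

lemma hvec_eq (x y : Vec n) (i : Fin n) : hvec x y i = y i • ex i + x i • ey i := by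
  unfold hvec ex ey
  refine Prod.ext ?_ ?_ <;> funext j <;>
    simp [Pi.single_apply, mul_comm]

lemma pair_split (a b : Vec n) :
    ((b, (0:Vec n)) : Vec n × Vec n) = (a, (0:Vec n)) + (b - a, (0:Vec n)) := by
  rw [Prod.mk_add_mk]; simp

lemma pairx_norm (a : Vec n) : ‖((a, (0:Vec n)) : Vec n × Vec n)‖ = ‖a‖ := by
  rw [Prod.norm_def]; simp [norm_nonneg]

lemma ex_norm_le (i : Fin n) : ‖(ex i : Vec n × Vec n)‖ ≤ 1 := by
  rw [ex, pairx_norm]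
  refine (pi_norm_le_iff_of_nonneg zero_le_one).mpr fun j => ?_
  by_cases h : j = i <;> simp [Pi.single_apply, h]

lemma ey_norm_le (i : Fin n) : ‖(ey i : Vec n × Vec n)‖ ≤ 1 := by
  have : ‖(ey i : Vec n × Vec n)‖ = ‖(Pi.single i 1 : Vec n)‖ := by
    rw [ey, Prod.norm_def]; simp [norm_nonneg]
  rw [this]
  refine (pi_norm_le_iff_of_nonneg zero_le_one).mpr fun j => ?_
  by_cases h : j = i <;> simp [Pi.single_apply, h]

lemma cover1 {xb yb : Vec n} (hxy : ∀ i, xb i * yb i = 0) (hy0 : ∀ i, 0 ≤ yb i) :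
    (a01 xb yb ∪ a00 xb yb) ∪ a10 xb yb = Finset.univ := by
  ext i
  simp only [Finset.mem_union, a01, a00, a10, Finset.mem_filter, Finset.mem_univ, true_and,
    iff_true]
  by_cases hx : xb i = 0
  · by_cases hy : yb i = 0
    · exact Or.inl (Or.inr ⟨hx, hy⟩)
    · exact Or.inl (Or.inl ⟨hx, lt_of_le_of_ne (hy0 i) (Ne.symm hy)⟩)
  · have hy : yb i = 0 := by
      rcases mul_eq_zero.mp (hxy i) with h | h
      · exact absurd h hx
      · exact h
    exact Or.inr ⟨hx, hy⟩

lemma cover2 {xb yb : Vec n} (hxy : ∀ i, xb i * yb i = 0) (hy0 : ∀ i, 0 ≤ yb i) :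
    (a10 xb yb ∪ a00 xb yb) ∪ a01 xb yb = Finset.univ := by
  ext i
  simp only [Finset.mem_union, a01, a00, a10, Finset.mem_filter, Finset.mem_univ, true_and,
    iff_true]
  by_cases hx : xb i = 0
  · by_cases hy : yb i = 0
    · exact Or.inl (Or.inr ⟨hx, hy⟩)
    · exact Or.inr ⟨hx, lt_of_le_of_ne (hy0 i) (Ne.symm hy)⟩
  · have hy : yb i = 0 := by
      rcases mul_eq_zero.mp (hxy i) with h | h
      · exact absurd h hx
      · exact h
    exact Or.inl (Or.inl ⟨hx, hy⟩)

lemma disj1 {xb yb : Vec n} : Disjoint (a01 xb yb ∪ a00 xb yb) (a10 xb yb) := by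
  simp only [Finset.disjoint_left, Finset.mem_union, a01, a00, a10, Finset.mem_filter,
    Finset.mem_univ, true_and]
  rintro i (⟨hx, _⟩ | ⟨hx, _⟩) ⟨hx', _⟩ <;> exact hx' hx

lemma disj2 {xb yb : Vec n} : Disjoint (a10 xb yb ∪ a00 xb yb) (a01 xb yb) := by
  simp only [Finset.disjoint_left, Finset.mem_union, a01, a00, a10, Finset.mem_filter,
    Finset.mem_univ, true_and]
  rintro i (⟨_, hy⟩ | ⟨_, hy⟩) ⟨_, hy'⟩ <;> exact hy'.ne' hy

lemma a01_not_a00 {xb yb : Vec n} {i : Fin n} (h : i ∈ a01 xb yb) : i ∉ a00 xb yb := by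
  simp only [a01, a00, Finset.mem_filter, Finset.mem_univ, true_and] at h ⊢
  exact fun hc => h.2.ne' hc.2

set_option synthInstance.maxHeartbeats 1000000 in
lemma exists_bound {E F : Type*} [NormedAddCommGroup E] [NormedSpace ℝ E]
    [FiniteDimensional ℝ E] [NormedAddCommGroup F] [NormedSpace ℝ F]
    [FiniteDimensional ℝ F]
    (A : E →ₗ[ℝ] F) (W : Submodule ℝ E) (hinj : ∀ z ∈ W, A z = 0 → z = 0) :
    ∃ C : ℝ, 0 ≤ C ∧ ∀ z ∈ W, ‖z‖ ≤ C * ‖A z‖ := by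
  set B : W →ₗ[ℝ] F := A.domRestrict W with hB
  have hker : LinearMap.ker B = ⊥ := by
    rw [LinearMap.ker_eq_bot']
    rintro ⟨z, hz⟩ hzero
    have : A z = 0 := hzero
    exact Subtype.ext (hinj z hz this)
  obtain ⟨g, hg⟩ := B.exists_leftInverse_of_injective hker
  set G := LinearMap.toContinuousLinearMap g with hG
  refine ⟨‖G‖, G.opNorm_nonneg, fun z hz => ?_⟩
  have h1 : g (B ⟨z, hz⟩) = ⟨z, hz⟩ := by
    have := congrArg (fun φ => φ ⟨z, hz⟩) hg
    simpa using this
  have h2 : ‖z‖ = ‖G (B ⟨z, hz⟩)‖ := by rw [show G (B ⟨z, hz⟩) = g (B ⟨z, hz⟩) from rfl, h1]; rfl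
  calc ‖z‖ = ‖G (B ⟨z, hz⟩)‖ := h2
    _ ≤ ‖G‖ * ‖B ⟨z, hz⟩‖ := G.le_opNorm _
    _ = ‖G‖ * ‖A z‖ := rfl

lemma grad_continuous {f : Vec n → ℝ} (hf : ContDiff ℝ 2 f) : Continuous (grad f) := by
  unfold grad
  refine continuous_pi fun i => ?_
  exact (ContinuousLinearMap.apply ℝ ℝ (Pi.single i 1 : Vec n)).continuous.comp
    (hf.continuous_fderiv (by norm_num))

/-- The linear map built from the MPOC-LICQ family at (x̄,ȳ). -/
def Amap (D : Setting n P Q) (xb yb : Vec n) : MultV n P Q →ₗ[ℝ] (Vec n × Vec n) where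
  toFun z :=
    (∑ p, z.1 p • ((grad (D.h p) xb, (0 : Vec n)) : Vec n × Vec n))
    + (∑ q ∈ Q0 D xb, z.2.1 q • ((grad (D.g q) xb, (0 : Vec n)) : Vec n × Vec n))
    + (∑ i ∈ Eact D yb, z.2.2.1 i • ey i)
    + z.2.2.2.1 • eAll
    + (∑ i ∈ a01 xb yb ∪ a00 xb yb, z.2.2.2.2.1 i • ex i)
    + (∑ i ∈ a10 xb yb ∪ a00 xb yb, z.2.2.2.2.2 i • ey i)
  map_add' a b := by
    simp only [Prod.fst_add, Prod.snd_add, Pi.add_apply, add_smul, Finset.sum_add_distrib]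
    abel
  map_smul' c a := by
    simp only [Prod.smul_fst, Prod.smul_snd, Pi.smul_apply, smul_eq_mul, RingHom.id_apply,
      mul_smul, ← Finset.smul_sum, smul_add]

/-- The subspace of multiplier vectors with correct supports. -/
def W0 (D : Setting n P Q) (xb yb : Vec n) : Submodule ℝ (MultV n P Q) where
  carrier := {z | (∀ q, q ∉ Q0 D xb → z.2.1 q = 0) ∧ (∀ i, i ∉ Eact D yb → z.2.2.1 i = 0) ∧
    ((∑ i, yb i) ≠ (n : ℝ) - D.s → z.2.2.2.1 = 0) ∧
    (∀ i, i ∉ a01 xb yb ∪ a00 xb yb → z.2.2.2.2.1 i = 0) ∧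
    (∀ i, i ∉ a10 xb yb ∪ a00 xb yb → z.2.2.2.2.2 i = 0)}
  add_mem' := by
    rintro a b ⟨a1, a2, a3, a4, a5⟩ ⟨b1, b2, b3, b4, b5⟩
    refine ⟨fun q hq => ?_, fun i hi => ?_, fun h => ?_, fun i hi => ?_, fun i hi => ?_⟩ <;>
      simp only [Prod.fst_add, Prod.snd_add, Pi.add_apply]
    · rw [a1 q hq, b1 q hq, add_zero]
    · rw [a2 i hi, b2 i hi, add_zero]
    · rw [a3 h, b3 h, add_zero]
    · rw [a4 i hi, b4 i hi, add_zero]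
    · rw [a5 i hi, b5 i hi, add_zero]
  zero_mem' := by
    refine ⟨fun q _ => rfl, fun i _ => rfl, fun _ => rfl, fun i _ => rfl, fun i _ => rfl⟩
  smul_mem' := by
    rintro c a ⟨a1, a2, a3, a4, a5⟩
    refine ⟨fun q hq => ?_, fun i hi => ?_, fun h => ?_, fun i hi => ?_, fun i hi => ?_⟩ <;>
      simp only [Prod.smul_fst, Prod.smul_snd, Pi.smul_apply, smul_eq_mul]
    · rw [a1 q hq, mul_zero]
    · rw [a2 i hi, mul_zero]
    · rw [a3 h, mul_zero]
    · rw [a4 i hi, mul_zero]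
    · rw [a5 i hi, mul_zero]

lemma W0_inj (D : Setting n P Q) (xb yb : Vec n) (hL : MPOC_LICQ D xb yb) :
    ∀ z ∈ W0 D xb yb, Amap D xb yb z = 0 → z = 0 := by
  rintro ⟨l, m1, m2, m3, s1, s2⟩ ⟨h1, h2, h3, h4, h5⟩ heq
  obtain ⟨c1, c2, c3, c4, c5, c6⟩ := hL l m1 m2 m3 s1 s2 h3 heq
  have e1 : l = 0 := funext fun p => c1 p
  have e2 : m1 = 0 := funext fun q => by
    by_cases hq : q ∈ Q0 D xb
    · exact c2 q hq
    · exact h1 q hq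
  have e3 : m2 = 0 := funext fun i => by
    by_cases hi : i ∈ Eact D yb
    · exact c3 i hi
    · exact h2 i hi
  have e5 : s1 = 0 := funext fun i => by
    by_cases hi : i ∈ a01 xb yb ∪ a00 xb yb
    · exact c5 i hi
    · exact h4 i hi
  have e6 : s2 = 0 := funext fun i => by
    by_cases hi : i ∈ a10 xb yb ∪ a00 xb yb
    · exact c6 i hi
    · exact h5 i hi
  simp only [Prod.mk_eq_zero]
  exact ⟨e1, e2, e3, c4, e5, e6⟩

/-- The limit multiplier vector built from the T-stationarity multipliers. -/
def zbar (D : Setting n P Q) (xb yb : Vec n) (Mb : TMult n P Q) : MultV n P Q :=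
  (Mb.lam,
   fun q => if q ∈ Q0 D xb then Mb.mu1 q else 0,
   fun i => if i ∈ Eact D yb then -Mb.mu2 i else 0,
   Mb.mu3,
   fun i => (if i ∈ a01 xb yb then Mb.sig1 i else 0) + (if i ∈ a00 xb yb then Mb.rho1 i else 0),
   fun i => (if i ∈ a10 xb yb then Mb.sig2 i else 0) + (if i ∈ a00 xb yb then Mb.rho2 i else 0))

lemma zbar_mem (D : Setting n P Q) (xb yb : Vec n) (Mb : TMult n P Q)
    (hc : Mb.mu3 * ((∑ i, yb i) - ((n : ℝ) - D.s)) = 0) :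
    zbar D xb yb Mb ∈ W0 D xb yb := by
  refine ⟨fun q hq => if_neg hq, fun i hi => if_neg hi, fun h => ?_, fun i hi => ?_,
    fun i hi => ?_⟩
  · rcases mul_eq_zero.mp hc with h' | h'
    · exact h'
    · exact absurd (sub_eq_zero.mp h') h
  · simp only [Finset.mem_union, not_or] at hi
    simp [zbar, if_neg hi.1, if_neg hi.2]
  · simp only [Finset.mem_union, not_or] at hi
    simp [zbar, if_neg hi.1, if_neg hi.2]

lemma Amap_zbar (D : Setting n P Q) (xb yb : Vec n) (Mb : TMult n P Q)
    (hTS : TStatEq D xb yb Mb) :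
    Amap D xb yb (zbar D xb yb Mb) = (grad D.f xb, D.c) := by
  unfold TStatEq at hTS
  rw [hTS]
  show (∑ p, Mb.lam p • ((grad (D.h p) xb, (0 : Vec n)) : Vec n × Vec n))
    + (∑ q ∈ Q0 D xb, (if q ∈ Q0 D xb then Mb.mu1 q else 0) •
        ((grad (D.g q) xb, (0 : Vec n)) : Vec n × Vec n))
    + (∑ i ∈ Eact D yb, (if i ∈ Eact D yb then -Mb.mu2 i else 0) • ey i)
    + Mb.mu3 • eAll
    + (∑ i ∈ a01 xb yb ∪ a00 xb yb,
        ((if i ∈ a01 xb yb then Mb.sig1 i else 0) + (if i ∈ a00 xb yb then Mb.rho1 i else 0)) • ex i)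
    + (∑ i ∈ a10 xb yb ∪ a00 xb yb,
        ((if i ∈ a10 xb yb then Mb.sig2 i else 0) + (if i ∈ a00 xb yb then Mb.rho2 i else 0)) • ey i)
    = _
  have h2 : (∑ q ∈ Q0 D xb, (if q ∈ Q0 D xb then Mb.mu1 q else 0) •
      ((grad (D.g q) xb, (0 : Vec n)) : Vec n × Vec n))
      = ∑ q ∈ Q0 D xb, Mb.mu1 q • ((grad (D.g q) xb, (0 : Vec n)) : Vec n × Vec n) :=
    Finset.sum_congr rfl fun q hq => by rw [if_pos hq]
  have h3 : (∑ i ∈ Eact D yb, (if i ∈ Eact D yb then -Mb.mu2 i else 0) • ey i)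
      = -∑ i ∈ Eact D yb, Mb.mu2 i • (ey i : Vec n × Vec n) := by
    rw [← Finset.sum_neg_distrib]
    exact Finset.sum_congr rfl fun i hi => by rw [if_pos hi, neg_smul]
  have h5 : (∑ i ∈ a01 xb yb ∪ a00 xb yb,
      ((if i ∈ a01 xb yb then Mb.sig1 i else 0) + (if i ∈ a00 xb yb then Mb.rho1 i else 0)) • ex i)
      = (∑ i ∈ a01 xb yb, Mb.sig1 i • (ex i : Vec n × Vec n))
        + ∑ i ∈ a00 xb yb, Mb.rho1 i • (ex i : Vec n × Vec n) := by
    simp only [add_smul, Finset.sum_add_distrib, ite_smul, zero_smul, Finset.sum_ite_mem,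
      Finset.union_inter_cancel_left, Finset.union_inter_cancel_right]
  have h6 : (∑ i ∈ a10 xb yb ∪ a00 xb yb,
      ((if i ∈ a10 xb yb then Mb.sig2 i else 0) + (if i ∈ a00 xb yb then Mb.rho2 i else 0)) • ey i)
      = (∑ i ∈ a10 xb yb, Mb.sig2 i • (ey i : Vec n × Vec n))
        + ∑ i ∈ a00 xb yb, Mb.rho2 i • (ey i : Vec n × Vec n) := by
    simp only [add_smul, Finset.sum_add_distrib, ite_smul, zero_smul, Finset.sum_ite_mem,
      Finset.union_inter_cancel_left, Finset.union_inter_cancel_right]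
  rw [h2, h3, h5, h6, Finset.sum_add_distrib]
  abel

end Statement18Aux


section Statement18Key

variable {n : ℕ} {P Q : Type*} [Fintype P] [Fintype Q]

/-- Signed complementarity multiplier. -/
def etaC (t : ℝ) (x y : Vec n) (N : SMult n P Q) (i : Fin n) : ℝ :=
  (if i ∈ Hge t x y then N.etaGe i else 0) - (if i ∈ Hle t x y then N.etaLe i else 0)

/-- The multiplier vector associated with a KKT point of S(t). -/
def zvecc (D : Setting n P Q) (xb yb : Vec n) (t : ℝ) (x y : Vec n) (N : SMult n P Q) :
    MultV n P Q :=
  (N.lam,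
   fun q => if q ∈ Q0 D x then N.mu1 q else 0,
   fun i => if i ∈ Eact D y then -N.mu2 i else 0,
   N.mu3,
   fun i => if i ∈ a01 xb yb ∪ a00 xb yb then etaC t x y N i * y i else 0,
   fun i => if i ∈ a10 xb yb ∪ a00 xb yb then
     etaC t x y N i * x i + (if i ∈ Nact y then N.nu i else 0) else 0)

lemma key_identity (D : Setting n P Q) (xb yb : Vec n) {t : ℝ} {x y : Vec n} {N : SMult n P Q}
    (heq : KKTEq D t x y N)
    (hQ : Q0 D x ⊆ Q0 D xb) (hE : Eact D y ⊆ Eact D yb)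
    (hN : Nact y ⊆ a10 xb yb ∪ a00 xb yb)
    (hxy : ∀ i, xb i * yb i = 0) (hy0 : ∀ i, 0 ≤ yb i) :
    Amap D xb yb (zvecc D xb yb t x y N) =
      (grad D.f x, D.c)
      - (∑ p, N.lam p • ((grad (D.h p) x - grad (D.h p) xb, (0:Vec n)) : Vec n × Vec n))
      - (∑ q ∈ Q0 D xb, (if q ∈ Q0 D x then N.mu1 q else 0) •
          ((grad (D.g q) x - grad (D.g q) xb, (0:Vec n)) : Vec n × Vec n))
      - (∑ i ∈ a10 xb yb, (etaC t x y N i * y i) • ex i)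
      - (∑ i ∈ a01 xb yb, (etaC t x y N i * x i) • ey i) := by
  unfold KKTEq at heq
  -- rewrite the pieces of the KKT equation
  have P1 : (∑ p, N.lam p • ((grad (D.h p) x, (0:Vec n)) : Vec n × Vec n))
      = (∑ p, N.lam p • ((grad (D.h p) xb, (0:Vec n)) : Vec n × Vec n))
        + ∑ p, N.lam p • ((grad (D.h p) x - grad (D.h p) xb, (0:Vec n)) : Vec n × Vec n) := by
    rw [← Finset.sum_add_distrib]
    exact Finset.sum_congr rfl fun p _ => by
      rw [← smul_add, ← pair_split]
  have P2a : (∑ q ∈ Q0 D x, N.mu1 q • ((grad (D.g q) x, (0:Vec n)) : Vec n × Vec n))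
      = ∑ q ∈ Q0 D xb, (if q ∈ Q0 D x then N.mu1 q else 0) •
          ((grad (D.g q) x, (0:Vec n)) : Vec n × Vec n) := by
    simp only [ite_smul, zero_smul, Finset.sum_ite_mem, Finset.inter_eq_right.mpr hQ]
  have P2b : (∑ q ∈ Q0 D xb, (if q ∈ Q0 D x then N.mu1 q else 0) •
      ((grad (D.g q) x, (0:Vec n)) : Vec n × Vec n))
      = (∑ q ∈ Q0 D xb, (if q ∈ Q0 D x then N.mu1 q else 0) •
          ((grad (D.g q) xb, (0:Vec n)) : Vec n × Vec n))
        + ∑ q ∈ Q0 D xb, (if q ∈ Q0 D x then N.mu1 q else 0) •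
          ((grad (D.g q) x - grad (D.g q) xb, (0:Vec n)) : Vec n × Vec n) := by
    rw [← Finset.sum_add_distrib]
    exact Finset.sum_congr rfl fun q _ => by
      rw [← smul_add, ← pair_split]
  have P3 : (∑ i ∈ Eact D y, N.mu2 i • (ey i : Vec n × Vec n))
      = -∑ i ∈ Eact D yb, (if i ∈ Eact D y then -N.mu2 i else 0) • (ey i : Vec n × Vec n) := by
    simp only [ite_smul, zero_smul, Finset.sum_ite_mem, Finset.inter_eq_right.mpr hE,
      neg_smul, Finset.sum_neg_distrib, neg_neg]
  have P5 : (∑ i ∈ Hge t x y, N.etaGe i • hvec x y i)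
      = ((∑ i : Fin n, (etaC t x y N i * y i) • ex i)
          + ∑ i : Fin n, (etaC t x y N i * x i) • ey i)
        + ∑ i ∈ Hle t x y, N.etaLe i • hvec x y i := by
    have h1 : (∑ i ∈ Hge t x y, N.etaGe i • hvec x y i)
        = ∑ i : Fin n, (if i ∈ Hge t x y then N.etaGe i else 0) • hvec x y i := by
      simp only [ite_smul, zero_smul, Finset.sum_ite_mem, Finset.univ_inter]
    have h2 : (∑ i ∈ Hle t x y, N.etaLe i • hvec x y i)
        = ∑ i : Fin n, (if i ∈ Hle t x y then N.etaLe i else 0) • hvec x y i := by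
      simp only [ite_smul, zero_smul, Finset.sum_ite_mem, Finset.univ_inter]
    rw [h1, h2, ← Finset.sum_add_distrib, ← Finset.sum_add_distrib]
    refine Finset.sum_congr rfl fun i _ => ?_
    have : (if i ∈ Hge t x y then N.etaGe i else 0) • hvec x y i
        = etaC t x y N i • hvec x y i
          + (if i ∈ Hle t x y then N.etaLe i else 0) • hvec x y i := by
      rw [etaC, sub_smul]; abel
    rw [this, hvec_eq, smul_add, smul_smul, smul_smul]
  have split1 : (∑ i : Fin n, (etaC t x y N i * y i) • ex i)
      = (∑ i ∈ a01 xb yb ∪ a00 xb yb, (etaC t x y N i * y i) • ex i)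
        + ∑ i ∈ a10 xb yb, (etaC t x y N i * y i) • ex i := by
    rw [← Finset.sum_union disj1, cover1 hxy hy0]
  have split2 : (∑ i : Fin n, (etaC t x y N i * x i) • ey i)
      = (∑ i ∈ a10 xb yb ∪ a00 xb yb, (etaC t x y N i * x i) • ey i)
        + ∑ i ∈ a01 xb yb, (etaC t x y N i * x i) • ey i := by
    rw [← Finset.sum_union disj2, cover2 hxy hy0]
  have hS7 : (∑ i ∈ Nact y, N.nu i • (ey i : Vec n × Vec n))
      = ∑ i ∈ a10 xb yb ∪ a00 xb yb, (if i ∈ Nact y then N.nu i else 0) • (ey i : Vec n × Vec n) := by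
    simp only [ite_smul, zero_smul, Finset.sum_ite_mem, Finset.inter_eq_right.mpr hN]
  -- now prove the goal
  show (∑ p, N.lam p • ((grad (D.h p) xb, (0 : Vec n)) : Vec n × Vec n))
    + (∑ q ∈ Q0 D xb, (if q ∈ Q0 D x then N.mu1 q else 0) •
        ((grad (D.g q) xb, (0 : Vec n)) : Vec n × Vec n))
    + (∑ i ∈ Eact D yb, (if i ∈ Eact D y then -N.mu2 i else 0) • ey i)
    + N.mu3 • eAll
    + (∑ i ∈ a01 xb yb ∪ a00 xb yb,
        (if i ∈ a01 xb yb ∪ a00 xb yb then etaC t x y N i * y i else 0) • ex i)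
    + (∑ i ∈ a10 xb yb ∪ a00 xb yb,
        (if i ∈ a10 xb yb ∪ a00 xb yb then
          etaC t x y N i * x i + (if i ∈ Nact y then N.nu i else 0) else 0) • ey i)
    = _
  have hT5 : (∑ i ∈ a01 xb yb ∪ a00 xb yb,
      (if i ∈ a01 xb yb ∪ a00 xb yb then etaC t x y N i * y i else 0) • (ex i : Vec n × Vec n))
      = ∑ i ∈ a01 xb yb ∪ a00 xb yb, (etaC t x y N i * y i) • (ex i : Vec n × Vec n) :=
    Finset.sum_congr rfl fun i hi => by rw [if_pos hi]
  have hT6 : (∑ i ∈ a10 xb yb ∪ a00 xb yb,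
      (if i ∈ a10 xb yb ∪ a00 xb yb then
        etaC t x y N i * x i + (if i ∈ Nact y then N.nu i else 0) else 0) • (ey i : Vec n × Vec n))
      = (∑ i ∈ a10 xb yb ∪ a00 xb yb, (etaC t x y N i * x i) • (ey i : Vec n × Vec n))
        + ∑ i ∈ a10 xb yb ∪ a00 xb yb,
            (if i ∈ Nact y then N.nu i else 0) • (ey i : Vec n × Vec n) := by
    rw [← Finset.sum_add_distrib]
    exact Finset.sum_congr rfl fun i hi => by rw [if_pos hi, add_smul]
  rw [hT5, hT6, heq, P1, P2a, P2b, P3, P5, split1, split2, hS7]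
  abel

end Statement18Key


section Statement18Est

variable {n : ℕ} {P Q : Type*} [Fintype P] [Fintype Q]

lemma comp_lam (z : MultV n P Q) (p : P) : |z.1 p| ≤ ‖z‖ :=
  calc |z.1 p| = ‖z.1 p‖ := (Real.norm_eq_abs _).symm
    _ ≤ ‖z.1‖ := norm_le_pi_norm _ p
    _ ≤ ‖z‖ := norm_fst_le z

lemma comp_mu1 (z : MultV n P Q) (q : Q) : |z.2.1 q| ≤ ‖z‖ :=
  calc |z.2.1 q| = ‖z.2.1 q‖ := (Real.norm_eq_abs _).symm
    _ ≤ ‖z.2.1‖ := norm_le_pi_norm _ q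
    _ ≤ ‖z.2‖ := norm_fst_le _
    _ ≤ ‖z‖ := norm_snd_le z

lemma comp_s1 (z : MultV n P Q) (i : Fin n) : |z.2.2.2.2.1 i| ≤ ‖z‖ :=
  calc |z.2.2.2.2.1 i| = ‖z.2.2.2.2.1 i‖ := (Real.norm_eq_abs _).symm
    _ ≤ ‖z.2.2.2.2.1‖ := norm_le_pi_norm _ i
    _ ≤ ‖z.2.2.2.2‖ := norm_fst_le _
    _ ≤ ‖z.2.2.2‖ := norm_snd_le _
    _ ≤ ‖z.2.2‖ := norm_snd_le _
    _ ≤ ‖z.2‖ := norm_snd_le _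
    _ ≤ ‖z‖ := norm_snd_le z

lemma comp_s2 (z : MultV n P Q) (i : Fin n) : |z.2.2.2.2.2 i| ≤ ‖z‖ :=
  calc |z.2.2.2.2.2 i| = ‖z.2.2.2.2.2 i‖ := (Real.norm_eq_abs _).symm
    _ ≤ ‖z.2.2.2.2.2‖ := norm_le_pi_norm _ i
    _ ≤ ‖z.2.2.2.2‖ := norm_snd_le _
    _ ≤ ‖z.2.2.2‖ := norm_snd_le _
    _ ≤ ‖z.2.2‖ := norm_snd_le _
    _ ≤ ‖z.2‖ := norm_snd_le _
    _ ≤ ‖z‖ := norm_snd_le z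

lemma key_est (D : Setting n P Q) (xb yb : Vec n) (Mb : TMult n P Q)
    (hTS : TStatEq D xb yb Mb)
    {t : ℝ} {x y : Vec n} {N : SMult n P Q}
    (heq : KKTEq D t x y N)
    (hQ : Q0 D x ⊆ Q0 D xb) (hE : Eact D y ⊆ Eact D yb)
    (hN : Nact y ⊆ a10 xb yb ∪ a00 xb yb)
    (hxy : ∀ i, xb i * yb i = 0) (hy0 : ∀ i, 0 ≤ yb i) (htne : t ≠ 0) :
    ‖Amap D xb yb (zvecc D xb yb t x y N - zbar D xb yb Mb)‖ ≤
      ‖grad D.f x - grad D.f xb‖ +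
      ((∑ p, ‖grad (D.h p) x - grad (D.h p) xb‖)
        + (∑ q ∈ Q0 D xb, ‖grad (D.g q) x - grad (D.g q) xb‖)
        + (∑ i ∈ a10 xb yb, |y i| / |x i|)
        + (∑ i ∈ a01 xb yb, |x i| / |y i|)) * ‖zvecc D xb yb t x y N‖ := by
  set z := zvecc D xb yb t x y N with hz
  -- coefficient bounds on the a10 / a01 error terms
  have key1 : ∀ i ∈ a10 xb yb, |etaC t x y N i * y i| ≤ |y i| / |x i| * ‖z‖ := by
    intro i hi
    by_cases hη : etaC t x y N i = 0
    · rw [hη, zero_mul, abs_zero]; positivity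
    · have hiH : i ∈ Hge t x y ∨ i ∈ Hle t x y := by
        by_contra hc
        push_neg at hc
        exact hη (by rw [etaC, if_neg hc.1, if_neg hc.2, sub_zero])
      have hprod : x i * y i ≠ 0 := by
        rcases hiH with h | h
        · rw [(Finset.mem_filter.mp h).2]; simpa using htne
        · rw [(Finset.mem_filter.mp h).2]; exact htne
      have hx : x i ≠ 0 := left_ne_zero_of_mul hprod
      have hy : y i ≠ 0 := right_ne_zero_of_mul hprod
      have hiN : i ∉ Nact y := by
        simp only [Nact, Finset.mem_filter, Finset.mem_univ, true_and]
        exact hy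
      have hcomp : z.2.2.2.2.2 i = etaC t x y N i * x i := by
        show (if i ∈ a10 xb yb ∪ a00 xb yb then
          etaC t x y N i * x i + (if i ∈ Nact y then N.nu i else 0) else 0) = _
        rw [if_pos (Finset.mem_union_left _ hi), if_neg hiN, add_zero]
      have h1 : |etaC t x y N i * x i| ≤ ‖z‖ := by
        rw [← hcomp]; exact comp_s2 z i
      have h2 : |etaC t x y N i * y i| = |etaC t x y N i * x i| * (|y i| / |x i|) := by
        rw [abs_mul, abs_mul]
        have : |x i| ≠ 0 := abs_ne_zero.mpr hx
        field_simp
      rw [h2]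
      calc |etaC t x y N i * x i| * (|y i| / |x i|)
          ≤ ‖z‖ * (|y i| / |x i|) := mul_le_mul_of_nonneg_right h1 (by positivity)
        _ = |y i| / |x i| * ‖z‖ := mul_comm _ _
  have key2 : ∀ i ∈ a01 xb yb, |etaC t x y N i * x i| ≤ |x i| / |y i| * ‖z‖ := by
    intro i hi
    by_cases hη : etaC t x y N i = 0
    · rw [hη, zero_mul, abs_zero]; positivity
    · have hiH : i ∈ Hge t x y ∨ i ∈ Hle t x y := by
        by_contra hc
        push_neg at hc
        exact hη (by rw [etaC, if_neg hc.1, if_neg hc.2, sub_zero])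
      have hprod : x i * y i ≠ 0 := by
        rcases hiH with h | h
        · rw [(Finset.mem_filter.mp h).2]; simpa using htne
        · rw [(Finset.mem_filter.mp h).2]; exact htne
      have hx : x i ≠ 0 := left_ne_zero_of_mul hprod
      have hy : y i ≠ 0 := right_ne_zero_of_mul hprod
      have hcomp : z.2.2.2.2.1 i = etaC t x y N i * y i := by
        show (if i ∈ a01 xb yb ∪ a00 xb yb then etaC t x y N i * y i else 0) = _
        rw [if_pos (Finset.mem_union_left _ hi)]
      have h1 : |etaC t x y N i * y i| ≤ ‖z‖ := by
        rw [← hcomp]; exact comp_s1 z i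
      have h2 : |etaC t x y N i * x i| = |etaC t x y N i * y i| * (|x i| / |y i|) := by
        rw [abs_mul, abs_mul]
        have : |y i| ≠ 0 := abs_ne_zero.mpr hy
        field_simp
      rw [h2]
      calc |etaC t x y N i * y i| * (|x i| / |y i|)
          ≤ ‖z‖ * (|x i| / |y i|) := mul_le_mul_of_nonneg_right h1 (by positivity)
        _ = |x i| / |y i| * ‖z‖ := mul_comm _ _
  -- norm bounds on the four error sums
  have bDh : ‖∑ p, N.lam p • ((grad (D.h p) x - grad (D.h p) xb, (0:Vec n)) : Vec n × Vec n)‖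
      ≤ (∑ p, ‖grad (D.h p) x - grad (D.h p) xb‖) * ‖z‖ := by
    calc ‖∑ p, N.lam p • ((grad (D.h p) x - grad (D.h p) xb, (0:Vec n)) : Vec n × Vec n)‖
        ≤ ∑ p, ‖N.lam p • ((grad (D.h p) x - grad (D.h p) xb, (0:Vec n)) : Vec n × Vec n)‖ :=
          norm_sum_le _ _
      _ ≤ ∑ p, ‖grad (D.h p) x - grad (D.h p) xb‖ * ‖z‖ := by
          refine Finset.sum_le_sum fun p _ => ?_
          rw [norm_smul, Real.norm_eq_abs, pairx_norm, mul_comm]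
          exact mul_le_mul_of_nonneg_left (comp_lam z p) (norm_nonneg _)
      _ = _ := (Finset.sum_mul _ _ _).symm
  have bDg : ‖∑ q ∈ Q0 D xb, (if q ∈ Q0 D x then N.mu1 q else 0) •
      ((grad (D.g q) x - grad (D.g q) xb, (0:Vec n)) : Vec n × Vec n)‖
      ≤ (∑ q ∈ Q0 D xb, ‖grad (D.g q) x - grad (D.g q) xb‖) * ‖z‖ := by
    calc ‖∑ q ∈ Q0 D xb, (if q ∈ Q0 D x then N.mu1 q else 0) •
        ((grad (D.g q) x - grad (D.g q) xb, (0:Vec n)) : Vec n × Vec n)‖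
        ≤ ∑ q ∈ Q0 D xb, ‖(if q ∈ Q0 D x then N.mu1 q else 0) •
            ((grad (D.g q) x - grad (D.g q) xb, (0:Vec n)) : Vec n × Vec n)‖ := norm_sum_le _ _
      _ ≤ ∑ q ∈ Q0 D xb, ‖grad (D.g q) x - grad (D.g q) xb‖ * ‖z‖ := by
          refine Finset.sum_le_sum fun q _ => ?_
          rw [norm_smul, Real.norm_eq_abs, pairx_norm, mul_comm]
          exact mul_le_mul_of_nonneg_left (comp_mu1 z q) (norm_nonneg _)
      _ = _ := (Finset.sum_mul _ _ _).symm
  have be1 : ‖∑ i ∈ a10 xb yb, (etaC t x y N i * y i) • (ex i : Vec n × Vec n)‖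
      ≤ (∑ i ∈ a10 xb yb, |y i| / |x i|) * ‖z‖ := by
    calc ‖∑ i ∈ a10 xb yb, (etaC t x y N i * y i) • (ex i : Vec n × Vec n)‖
        ≤ ∑ i ∈ a10 xb yb, ‖(etaC t x y N i * y i) • (ex i : Vec n × Vec n)‖ := norm_sum_le _ _
      _ ≤ ∑ i ∈ a10 xb yb, |y i| / |x i| * ‖z‖ := by
          refine Finset.sum_le_sum fun i hi => ?_
          rw [norm_smul, Real.norm_eq_abs]
          calc |etaC t x y N i * y i| * ‖(ex i : Vec n × Vec n)‖
              ≤ |etaC t x y N i * y i| * 1 :=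
                mul_le_mul_of_nonneg_left (ex_norm_le i) (abs_nonneg _)
            _ = |etaC t x y N i * y i| := mul_one _
            _ ≤ _ := key1 i hi
      _ = _ := (Finset.sum_mul _ _ _).symm
  have be2 : ‖∑ i ∈ a01 xb yb, (etaC t x y N i * x i) • (ey i : Vec n × Vec n)‖
      ≤ (∑ i ∈ a01 xb yb, |x i| / |y i|) * ‖z‖ := by
    calc ‖∑ i ∈ a01 xb yb, (etaC t x y N i * x i) • (ey i : Vec n × Vec n)‖
        ≤ ∑ i ∈ a01 xb yb, ‖(etaC t x y N i * x i) • (ey i : Vec n × Vec n)‖ := norm_sum_le _ _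
      _ ≤ ∑ i ∈ a01 xb yb, |x i| / |y i| * ‖z‖ := by
          refine Finset.sum_le_sum fun i hi => ?_
          rw [norm_smul, Real.norm_eq_abs]
          calc |etaC t x y N i * x i| * ‖(ey i : Vec n × Vec n)‖
              ≤ |etaC t x y N i * x i| * 1 :=
                mul_le_mul_of_nonneg_left (ey_norm_le i) (abs_nonneg _)
            _ = |etaC t x y N i * x i| := mul_one _
            _ ≤ _ := key2 i hi
      _ = _ := (Finset.sum_mul _ _ _).symm
  -- assemble
  rw [map_sub, key_identity D xb yb heq hQ hE hN hxy hy0, Amap_zbar D xb yb Mb hTS]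
  have hre : ((grad D.f x, D.c) : Vec n × Vec n)
      - (∑ p, N.lam p • ((grad (D.h p) x - grad (D.h p) xb, (0:Vec n)) : Vec n × Vec n))
      - (∑ q ∈ Q0 D xb, (if q ∈ Q0 D x then N.mu1 q else 0) •
          ((grad (D.g q) x - grad (D.g q) xb, (0:Vec n)) : Vec n × Vec n))
      - (∑ i ∈ a10 xb yb, (etaC t x y N i * y i) • ex i)
      - (∑ i ∈ a01 xb yb, (etaC t x y N i * x i) • ey i)
      - (grad D.f xb, D.c)
      = ((grad D.f x - grad D.f xb, (0:Vec n)) : Vec n × Vec n)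
      - (∑ p, N.lam p • ((grad (D.h p) x - grad (D.h p) xb, (0:Vec n)) : Vec n × Vec n))
      - (∑ q ∈ Q0 D xb, (if q ∈ Q0 D x then N.mu1 q else 0) •
          ((grad (D.g q) x - grad (D.g q) xb, (0:Vec n)) : Vec n × Vec n))
      - (∑ i ∈ a10 xb yb, (etaC t x y N i * y i) • ex i)
      - (∑ i ∈ a01 xb yb, (etaC t x y N i * x i) • ey i) := by
    have hp : ((grad D.f x, D.c) : Vec n × Vec n) - (grad D.f xb, D.c)
        = ((grad D.f x - grad D.f xb, (0:Vec n)) : Vec n × Vec n) := by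
      rw [Prod.mk_sub_mk]; simp
    rw [← hp]; abel
  rw [hre]
  calc ‖((grad D.f x - grad D.f xb, (0:Vec n)) : Vec n × Vec n)
      - (∑ p, N.lam p • ((grad (D.h p) x - grad (D.h p) xb, (0:Vec n)) : Vec n × Vec n))
      - (∑ q ∈ Q0 D xb, (if q ∈ Q0 D x then N.mu1 q else 0) •
          ((grad (D.g q) x - grad (D.g q) xb, (0:Vec n)) : Vec n × Vec n))
      - (∑ i ∈ a10 xb yb, (etaC t x y N i * y i) • ex i)
      - (∑ i ∈ a01 xb yb, (etaC t x y N i * x i) • ey i)‖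
      ≤ ‖((grad D.f x - grad D.f xb, (0:Vec n)) : Vec n × Vec n)
      - (∑ p, N.lam p • ((grad (D.h p) x - grad (D.h p) xb, (0:Vec n)) : Vec n × Vec n))
      - (∑ q ∈ Q0 D xb, (if q ∈ Q0 D x then N.mu1 q else 0) •
          ((grad (D.g q) x - grad (D.g q) xb, (0:Vec n)) : Vec n × Vec n))
      - (∑ i ∈ a10 xb yb, (etaC t x y N i * y i) • ex i)‖
      + ‖∑ i ∈ a01 xb yb, (etaC t x y N i * x i) • (ey i : Vec n × Vec n)‖ := norm_sub_le _ _
    _ ≤ ‖((grad D.f x - grad D.f xb, (0:Vec n)) : Vec n × Vec n)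
      - (∑ p, N.lam p • ((grad (D.h p) x - grad (D.h p) xb, (0:Vec n)) : Vec n × Vec n))
      - (∑ q ∈ Q0 D xb, (if q ∈ Q0 D x then N.mu1 q else 0) •
          ((grad (D.g q) x - grad (D.g q) xb, (0:Vec n)) : Vec n × Vec n))‖
      + ‖∑ i ∈ a10 xb yb, (etaC t x y N i * y i) • (ex i : Vec n × Vec n)‖
      + ‖∑ i ∈ a01 xb yb, (etaC t x y N i * x i) • (ey i : Vec n × Vec n)‖ := by
        gcongr
        exact norm_sub_le _ _
    _ ≤ ‖((grad D.f x - grad D.f xb, (0:Vec n)) : Vec n × Vec n)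
      - (∑ p, N.lam p • ((grad (D.h p) x - grad (D.h p) xb, (0:Vec n)) : Vec n × Vec n))‖
      + ‖∑ q ∈ Q0 D xb, (if q ∈ Q0 D x then N.mu1 q else 0) •
          ((grad (D.g q) x - grad (D.g q) xb, (0:Vec n)) : Vec n × Vec n)‖
      + ‖∑ i ∈ a10 xb yb, (etaC t x y N i * y i) • (ex i : Vec n × Vec n)‖
      + ‖∑ i ∈ a01 xb yb, (etaC t x y N i * x i) • (ey i : Vec n × Vec n)‖ := by
        gcongr
        exact norm_sub_le _ _
    _ ≤ ‖((grad D.f x - grad D.f xb, (0:Vec n)) : Vec n × Vec n)‖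
      + ‖∑ p, N.lam p • ((grad (D.h p) x - grad (D.h p) xb, (0:Vec n)) : Vec n × Vec n)‖
      + ‖∑ q ∈ Q0 D xb, (if q ∈ Q0 D x then N.mu1 q else 0) •
          ((grad (D.g q) x - grad (D.g q) xb, (0:Vec n)) : Vec n × Vec n)‖
      + ‖∑ i ∈ a10 xb yb, (etaC t x y N i * y i) • (ex i : Vec n × Vec n)‖
      + ‖∑ i ∈ a01 xb yb, (etaC t x y N i * x i) • (ey i : Vec n × Vec n)‖ := by
        gcongr
        exact norm_sub_le _ _
    _ ≤ ‖grad D.f x - grad D.f xb‖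
      + (∑ p, ‖grad (D.h p) x - grad (D.h p) xb‖) * ‖z‖
      + (∑ q ∈ Q0 D xb, ‖grad (D.g q) x - grad (D.g q) xb‖) * ‖z‖
      + (∑ i ∈ a10 xb yb, |y i| / |x i|) * ‖z‖
      + (∑ i ∈ a01 xb yb, |x i| / |y i|) * ‖z‖ := by
        exact add_le_add (add_le_add (add_le_add (add_le_add
          (le_of_eq (pairx_norm _)) bDh) bDg) be1) be2
    _ = _ := by ring

end Statement18Est

/-- Step 3 of the proof of Theorem 3: eventually
a01(x̄,ȳ) \ H(x^k,y^k) ⊆ {i ∈ a01(x̄,ȳ) : σ̄₁ᵢ = 0}; in particular every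
i ∈ a01(x̄,ȳ) with σ̄₁ᵢ ≠ 0 eventually belongs to H(x^k,y^k). -/
theorem statement18 {n : ℕ} {P Q : Type*} [Fintype P] [Fintype Q]
    (D : Setting n P Q) (t : ℕ → ℝ) (htpos : ∀ k, 0 < t k)
    (ht0 : Filter.Tendsto t Filter.atTop (nhds 0))
    (X Y : ℕ → Vec n) (hK : ∀ k, KKT D (t k) (X k) (Y k))
    (xb yb : Vec n)
    (hconv : Filter.Tendsto (fun k => ((X k, Y k) : Vec n × Vec n))
      Filter.atTop (nhds (xb, yb)))
    (Mb : TMult n P Q) (hnd : NondegTStatAt D xb yb Mb) :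
    ∃ K : ℕ, ∀ k ≥ K,
      a01 xb yb \ Hact (t k) (X k) (Y k) ⊆
        (a01 xb yb).filter (fun i => Mb.sig1 i = 0) := by
  classical
  obtain ⟨hTSt, hLICQ, -, -, -, -, -⟩ := hnd
  obtain ⟨hfeas, -, -, -, hmu3c, -, hTSeq⟩ := hTSt
  obtain ⟨-, hgfe, hysum, hxyprod, hybnd⟩ := hfeas
  have hy0 : ∀ i, 0 ≤ yb i := fun i => (hybnd i).1
  choose NM hNM using hK
  -- convergence of the sequences
  have hX : Filter.Tendsto X Filter.atTop (nhds xb) := by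
    have := (continuous_fst.tendsto ((xb, yb) : Vec n × Vec n)).comp hconv
    exact this
  have hY : Filter.Tendsto Y Filter.atTop (nhds yb) := by
    have := (continuous_snd.tendsto ((xb, yb) : Vec n × Vec n)).comp hconv
    exact this
  have hXi : ∀ i, Filter.Tendsto (fun k => X k i) Filter.atTop (nhds (xb i)) :=
    fun i => ((continuous_apply i).tendsto xb).comp hX
  have hYi : ∀ i, Filter.Tendsto (fun k => Y k i) Filter.atTop (nhds (yb i)) :=
    fun i => ((continuous_apply i).tendsto yb).comp hY
  -- the uniform bound from MPOC-LICQ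
  obtain ⟨C, hC0, hC⟩ := exists_bound (Amap D xb yb) (W0 D xb yb) (W0_inj D xb yb hLICQ)
  have hzbmem : zbar D xb yb Mb ∈ W0 D xb yb := zbar_mem D xb yb Mb hmu3c
  -- eventual inclusions
  have hQev : ∀ᶠ k in atTop, Q0 D (X k) ⊆ Q0 D xb := by
    have h : ∀ q : Q, ∀ᶠ k in atTop, (q ∈ Q0 D (X k) → q ∈ Q0 D xb) := by
      intro q
      by_cases hq : D.g q xb = 0
      · exact Eventually.of_forall fun k _ => Finset.mem_filter.mpr ⟨Finset.mem_univ _, hq⟩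
      · have hgt : Filter.Tendsto (fun k => D.g q (X k)) atTop (nhds (D.g q xb)) :=
          (((D.hg q).continuous).tendsto xb).comp hX
        exact (hgt.eventually_ne hq).mono fun k hk hmem =>
          absurd (Finset.mem_filter.mp hmem).2 hk
    exact (eventually_all.mpr h).mono fun k hk q hq => hk q hq
  have hEev : ∀ᶠ k in atTop, Eact D (Y k) ⊆ Eact D yb := by
    have h : ∀ i : Fin n, ∀ᶠ k in atTop, (i ∈ Eact D (Y k) → i ∈ Eact D yb) := by
      intro i
      by_cases hq : yb i = 1 + D.ε
      · exact Eventually.of_forall fun k _ => Finset.mem_filter.mpr ⟨Finset.mem_univ _, hq⟩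
      · exact ((hYi i).eventually_ne hq).mono fun k hk hmem =>
          absurd (Finset.mem_filter.mp hmem).2 hk
    exact (eventually_all.mpr h).mono fun k hk i hi => hk i hi
  have hNev : ∀ᶠ k in atTop, Nact (Y k) ⊆ a10 xb yb ∪ a00 xb yb := by
    have h : ∀ i : Fin n, ∀ᶠ k in atTop, (i ∈ Nact (Y k) → i ∈ a10 xb yb ∪ a00 xb yb) := by
      intro i
      by_cases hq : yb i = 0
      · refine Eventually.of_forall fun k _ => ?_
        by_cases hx : xb i = 0
        · exact Finset.mem_union_right _
            (Finset.mem_filter.mpr ⟨Finset.mem_univ _, hx, hq⟩)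
        · exact Finset.mem_union_left _
            (Finset.mem_filter.mpr ⟨Finset.mem_univ _, hx, hq⟩)
      · exact ((hYi i).eventually_ne hq).mono fun k hk hmem =>
          absurd (Finset.mem_filter.mp hmem).2 hk
    exact (eventually_all.mpr h).mono fun k hk i hi => hk i hi
  have hmu3ev : ∀ᶠ k in atTop, ((∑ i, yb i) ≠ (n : ℝ) - D.s → (NM k).mu3 = 0) := by
    by_cases hss : (∑ i, yb i) = (n : ℝ) - D.s
    · exact Eventually.of_forall fun k h => absurd hss h
    · have hgt : (n : ℝ) - D.s < ∑ i, yb i := lt_of_le_of_ne hysum (Ne.symm hss)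
      have hsum : Filter.Tendsto (fun k => ∑ i, Y k i) atTop (nhds (∑ i, yb i)) :=
        tendsto_finset_sum _ fun i _ => hYi i
      refine (hsum.eventually (lt_mem_nhds hgt)).mono fun k hk _ => ?_
      rcases mul_eq_zero.mp (hNM k).2.2.2.2.1 with h0 | h0
      · exact h0
      · exact absurd (sub_eq_zero.mp h0) (ne_of_gt hk)
  -- membership of the KKT multiplier vectors in W0
  have hzmem : ∀ᶠ k in atTop, zvecc D xb yb (t k) (X k) (Y k) (NM k) ∈ W0 D xb yb := by
    filter_upwards [hQev, hEev, hmu3ev] with k hQk hEk hm3k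
    refine ⟨fun q hq => if_neg fun hmem => hq (hQk hmem),
      fun i hi => if_neg fun hmem => hi (hEk hmem), hm3k,
      fun i hi => if_neg hi, fun i hi => if_neg hi⟩
  -- the error moduli
  have hδt : Filter.Tendsto (fun k => ‖grad D.f (X k) - grad D.f xb‖) atTop (nhds 0) :=
    tendsto_iff_norm_sub_tendsto_zero.mp (((grad_continuous D.hf).tendsto xb).comp hX)
  have hεt : Filter.Tendsto (fun k =>
      (∑ p, ‖grad (D.h p) (X k) - grad (D.h p) xb‖)
      + (∑ q ∈ Q0 D xb, ‖grad (D.g q) (X k) - grad (D.g q) xb‖)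
      + (∑ i ∈ a10 xb yb, |Y k i| / |X k i|)
      + (∑ i ∈ a01 xb yb, |X k i| / |Y k i|)) atTop (nhds 0) := by
    have h1 : Filter.Tendsto (fun k => ∑ p, ‖grad (D.h p) (X k) - grad (D.h p) xb‖)
        atTop (nhds 0) := by
      have := tendsto_finset_sum (univ : Finset P) (fun p _ =>
        tendsto_iff_norm_sub_tendsto_zero.mp (((grad_continuous (D.hh p)).tendsto xb).comp hX))
      simpa using this
    have h2 : Filter.Tendsto (fun k => ∑ q ∈ Q0 D xb, ‖grad (D.g q) (X k) - grad (D.g q) xb‖)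
        atTop (nhds 0) := by
      have := tendsto_finset_sum (Q0 D xb) (fun q _ =>
        tendsto_iff_norm_sub_tendsto_zero.mp (((grad_continuous (D.hg q)).tendsto xb).comp hX))
      simpa using this
    have h3 : Filter.Tendsto (fun k => ∑ i ∈ a10 xb yb, |Y k i| / |X k i|) atTop (nhds 0) := by
      have hterm : ∀ i ∈ a10 xb yb,
          Filter.Tendsto (fun k => |Y k i| / |X k i|) atTop (nhds 0) := by
        intro i hi
        have hm := (Finset.mem_filter.mp hi).2
        have := ((hYi i).abs).div ((hXi i).abs) (abs_ne_zero.mpr hm.1)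
        simpa [hm.2, Pi.div_def] using this
      have := tendsto_finset_sum (a10 xb yb) hterm
      simpa using this
    have h4 : Filter.Tendsto (fun k => ∑ i ∈ a01 xb yb, |X k i| / |Y k i|) atTop (nhds 0) := by
      have hterm : ∀ i ∈ a01 xb yb,
          Filter.Tendsto (fun k => |X k i| / |Y k i|) atTop (nhds 0) := by
        intro i hi
        have hm := (Finset.mem_filter.mp hi).2
        have := ((hXi i).abs).div ((hYi i).abs) (abs_ne_zero.mpr hm.2.ne')
        simpa [hm.1, Pi.div_def] using this
      have := tendsto_finset_sum (a01 xb yb) hterm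
      simpa using this
    have := ((h1.add h2).add h3).add h4
    simpa using this
  have hε0 : ∀ k, (0:ℝ) ≤
      (∑ p, ‖grad (D.h p) (X k) - grad (D.h p) xb‖)
      + (∑ q ∈ Q0 D xb, ‖grad (D.g q) (X k) - grad (D.g q) xb‖)
      + (∑ i ∈ a10 xb yb, |Y k i| / |X k i|)
      + (∑ i ∈ a01 xb yb, |X k i| / |Y k i|) := by
    intro k
    have n1 : (0:ℝ) ≤ ∑ p, ‖grad (D.h p) (X k) - grad (D.h p) xb‖ :=
      Finset.sum_nonneg fun p _ => norm_nonneg _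
    have n2 : (0:ℝ) ≤ ∑ q ∈ Q0 D xb, ‖grad (D.g q) (X k) - grad (D.g q) xb‖ :=
      Finset.sum_nonneg fun q _ => norm_nonneg _
    have n3 : (0:ℝ) ≤ ∑ i ∈ a10 xb yb, |Y k i| / |X k i| :=
      Finset.sum_nonneg fun i _ => by positivity
    have n4 : (0:ℝ) ≤ ∑ i ∈ a01 xb yb, |X k i| / |Y k i| :=
      Finset.sum_nonneg fun i _ => by positivity
    linarith
  have hsmall : ∀ᶠ k in atTop, C *
      ((∑ p, ‖grad (D.h p) (X k) - grad (D.h p) xb‖)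
      + (∑ q ∈ Q0 D xb, ‖grad (D.g q) (X k) - grad (D.g q) xb‖)
      + (∑ i ∈ a10 xb yb, |Y k i| / |X k i|)
      + (∑ i ∈ a01 xb yb, |X k i| / |Y k i|)) ≤ 1/2 := by
    have hlt := hεt.eventually (gt_mem_nhds (show (0:ℝ) < 1/(2*(C+1)) by positivity))
    refine hlt.mono fun k hk => ?_
    have h1 := mul_le_mul_of_nonneg_left hk.le hC0
    have h2 : C * (1/(2*(C+1))) ≤ 1/2 := by
      rw [mul_one_div, div_le_div_iff₀ (by positivity) (by norm_num : (0:ℝ) < 2)]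
      linarith
    linarith
  -- the main norm estimate
  have hest : ∀ᶠ k in atTop, ‖zvecc D xb yb (t k) (X k) (Y k) (NM k) - zbar D xb yb Mb‖ ≤
      2*C*(‖grad D.f (X k) - grad D.f xb‖ +
        ((∑ p, ‖grad (D.h p) (X k) - grad (D.h p) xb‖)
        + (∑ q ∈ Q0 D xb, ‖grad (D.g q) (X k) - grad (D.g q) xb‖)
        + (∑ i ∈ a10 xb yb, |Y k i| / |X k i|)
        + (∑ i ∈ a01 xb yb, |X k i| / |Y k i|)) * ‖zbar D xb yb Mb‖) := by
    filter_upwards [hQev, hEev, hNev, hzmem, hsmall] with k hQk hEk hNk hmemk hsmk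
    have hAle := key_est D xb yb Mb hTSeq (hNM k).2.2.2.2.2.2.2.2 hQk hEk hNk hxyprod hy0
      (htpos k).ne'
    have h1 : ‖zvecc D xb yb (t k) (X k) (Y k) (NM k) - zbar D xb yb Mb‖ ≤
        C * ‖Amap D xb yb (zvecc D xb yb (t k) (X k) (Y k) (NM k) - zbar D xb yb Mb)‖ :=
      hC _ (Submodule.sub_mem _ hmemk hzbmem)
    have h2 : ‖zvecc D xb yb (t k) (X k) (Y k) (NM k)‖ ≤
        ‖zvecc D xb yb (t k) (X k) (Y k) (NM k) - zbar D xb yb Mb‖ + ‖zbar D xb yb Mb‖ := by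
      calc ‖zvecc D xb yb (t k) (X k) (Y k) (NM k)‖
          = ‖zvecc D xb yb (t k) (X k) (Y k) (NM k) - zbar D xb yb Mb + zbar D xb yb Mb‖ := by
            rw [sub_add_cancel]
        _ ≤ _ := norm_add_le _ _
    have h3 := mul_le_mul_of_nonneg_left hAle hC0
    have h4 := mul_le_mul_of_nonneg_left h2 (mul_nonneg hC0 (hε0 k))
    have h5 := mul_le_mul_of_nonneg_right hsmk
      (norm_nonneg (zvecc D xb yb (t k) (X k) (Y k) (NM k) - zbar D xb yb Mb))
    have h6 : (0:ℝ) ≤ ‖grad D.f (X k) - grad D.f xb‖ := norm_nonneg _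
    nlinarith [hε0 k, norm_nonneg (zbar D xb yb Mb),
      norm_nonneg (zvecc D xb yb (t k) (X k) (Y k) (NM k) - zbar D xb yb Mb)]
  -- convergence of the multiplier vectors
  have hzt : Filter.Tendsto (fun k => zvecc D xb yb (t k) (X k) (Y k) (NM k)) atTop
      (nhds (zbar D xb yb Mb)) := by
    rw [tendsto_iff_norm_sub_tendsto_zero]
    refine squeeze_zero' (Eventually.of_forall fun k => norm_nonneg _) hest ?_
    have : Filter.Tendsto (fun k =>
        2*C*(‖grad D.f (X k) - grad D.f xb‖ +
        ((∑ p, ‖grad (D.h p) (X k) - grad (D.h p) xb‖)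
        + (∑ q ∈ Q0 D xb, ‖grad (D.g q) (X k) - grad (D.g q) xb‖)
        + (∑ i ∈ a10 xb yb, |Y k i| / |X k i|)
        + (∑ i ∈ a01 xb yb, |X k i| / |Y k i|)) * ‖zbar D xb yb Mb‖)) atTop
        (nhds (2*C*(0 + 0 * ‖zbar D xb yb Mb‖))) :=
      (hδt.add (hεt.mul_const _)).const_mul _
    simpa using this
  -- projection to the s1-component
  have hproj : ∀ i : Fin n,
      Filter.Tendsto (fun k => (zvecc D xb yb (t k) (X k) (Y k) (NM k)).2.2.2.2.1 i) atTop
        (nhds ((zbar D xb yb Mb).2.2.2.2.1 i)) := by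
    intro i
    have hcont : Continuous (fun z : MultV n P Q => z.2.2.2.2.1 i) :=
      (continuous_apply i).comp (continuous_fst.comp (continuous_snd.comp
        (continuous_snd.comp (continuous_snd.comp continuous_snd))))
    exact (hcont.tendsto _).comp hzt
  -- endgame
  have hfin : ∀ᶠ k in atTop, ∀ i, i ∈ a01 xb yb → Mb.sig1 i ≠ 0 →
      i ∈ Hact (t k) (X k) (Y k) := by
    rw [Filter.eventually_all]
    intro i
    by_cases hi : i ∈ a01 xb yb ∧ Mb.sig1 i ≠ 0
    case neg => exact Eventually.of_forall fun k h1 h2 => absurd ⟨h1, h2⟩ hi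
    obtain ⟨hi01, hsig⟩ := hi
    have hzbc : (zbar D xb yb Mb).2.2.2.2.1 i = Mb.sig1 i := by
      show (if i ∈ a01 xb yb then Mb.sig1 i else 0)
        + (if i ∈ a00 xb yb then Mb.rho1 i else 0) = _
      rw [if_pos hi01, if_neg (a01_not_a00 hi01), add_zero]
    have hne := (hproj i).eventually_ne (by rw [hzbc]; exact hsig)
    refine hne.mono fun k hk _ _ => ?_
    by_contra hiH
    apply hk
    show (if i ∈ a01 xb yb ∪ a00 xb yb then
      etaC (t k) (X k) (Y k) (NM k) i * Y k i else 0) = (0:ℝ)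
    have hηz : etaC (t k) (X k) (Y k) (NM k) i = 0 := by
      have hge : i ∉ Hge (t k) (X k) (Y k) := fun h => hiH (Finset.mem_union_left _ h)
      have hle : i ∉ Hle (t k) (X k) (Y k) := fun h => hiH (Finset.mem_union_right _ h)
      rw [etaC, if_neg hge, if_neg hle, sub_zero]
    rw [hηz, zero_mul, if_pos (Finset.mem_union_left _ hi01)]
  obtain ⟨K, hKf⟩ := eventually_atTop.mp hfin
  refine ⟨K, fun k hk i hi => ?_⟩
  rw [Finset.mem_sdiff] at hi
  rw [Finset.mem_filter]
  refine ⟨hi.1, ?_⟩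
  by_contra hne
  exact hi.2 (hKf k hk i hi.1 hne)


end Scholtes
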